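/- Let Ψ solve -ΔΨ + αΨ = εΨ^p + Ψ^5 on ℝ³ with sufficient regularity and decay, v solve the linearized equation -Δv + αv = (pεΨ^{p-1} + 5Ψ⁴)v, and let w(x) := x·∇Ψ(x). Then w satisfies -Δw + αw = (pεΨ^{p-1} + 5Ψ⁴)w + 2(-αΨ + εΨ^p + Ψ^5), and consequently ∫_{ℝ³}(-αΨ + εΨ^p + Ψ^5)v dx = 0. -/

import Mathlib

open MeasureTheory

noncomputable def laplacian {d : ℕ} (f : EuclideanSpace ℝ (Fin d) → ℝ)
    (x : EuclideanSpace ℝ (Fin d)) : ℝ :=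
  ∑ i : Fin d, iteratedFDeriv ℝ 2 f x ![EuclideanSpace.single i 1, EuclideanSpace.single i 1]

namespace ScalingAux

open SchwartzMap

abbrev E3 : Type := EuclideanSpace ℝ (Fin 3)

noncomputable def e3 (i : Fin 3) : E3 := EuclideanSpace.single i 1

/-- Laplacian as a sum of second partial derivatives. -/
lemma lap_eq (f : E3 → ℝ) (hf : ContDiff ℝ 2 f) (x : E3) :
    laplacian f x = ∑ i, fderiv ℝ (fun y => fderiv ℝ f y (e3 i)) x (e3 i) := by
  unfold laplacian
  refine Finset.sum_congr rfl fun i _ => ?_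
  have hdf : DifferentiableAt ℝ (fderiv ℝ f) x :=
    ((hf.fderiv_right (m := 1) (by norm_num)).differentiable one_ne_zero) x
  rw [iteratedFDeriv_two_apply, fderiv_clm_apply hdf (differentiableAt_const (e3 i))]
  simp [e3]

/-- Derivative of `x ↦ (Df x) x`. -/
lemma fderiv_T (f : E3 → ℝ) (hf : ContDiff ℝ 2 f) (x u : E3) :
    fderiv ℝ (fun y => fderiv ℝ f y y) x u
      = fderiv ℝ (fderiv ℝ f) x u x + fderiv ℝ f x u := by
  have hdf : DifferentiableAt ℝ (fderiv ℝ f) x :=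
    ((hf.fderiv_right (m := 1) (by norm_num)).differentiable one_ne_zero) x
  rw [fderiv_clm_apply hdf differentiableAt_fun_id]
  simp [add_comm]

/-- Partial derivative of `x ↦ (Df x) x`, using symmetry of second derivatives. -/
lemma pd_T (f : E3 → ℝ) (hf : ContDiff ℝ 2 f) (x u : E3) :
    fderiv ℝ (fun y => fderiv ℝ f y y) x u
      = fderiv ℝ (fun y => fderiv ℝ f y u) x x + fderiv ℝ f x u := by
  have hdf : DifferentiableAt ℝ (fderiv ℝ f) x :=
    ((hf.fderiv_right (m := 1) (by norm_num)).differentiable one_ne_zero) x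
  have hsymm := hf.contDiffAt.isSymmSndFDerivAt (by norm_num) (x := x)
  rw [fderiv_T f hf x u, fderiv_clm_apply hdf (differentiableAt_const u)]
  simp [hsymm x u]

/-- `x ↦ (Df x) x` as a Schwartz map. -/
noncomputable def TS (f : 𝓢(E3, ℝ)) : 𝓢(E3, ℝ) :=
  bilinLeftCLM (ContinuousLinearMap.id ℝ (E3 →L[ℝ] ℝ))
    ((ContinuousLinearMap.id ℝ E3).hasTemperateGrowth) (fderivCLM ℝ E3 ℝ f)

lemma TS_apply (f : 𝓢(E3, ℝ)) (x : E3) : TS f x = fderiv ℝ (⇑f) x x := rfl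

lemma smooth2 (f : 𝓢(E3, ℝ)) : ContDiff ℝ 2 ⇑f := by exact_mod_cast f.smooth 2

noncomputable def pderivCLM (_𝕜 : Type) (m : E3) : 𝓢(E3, ℝ) →L[ℝ] 𝓢(E3, ℝ) :=
  LineDeriv.lineDerivOpCLM ℝ 𝓢(E3, ℝ) m

lemma pderivCLM_apply (_𝕜 : Type) (m : E3) (f : 𝓢(E3, ℝ)) (x : E3) :
    pderivCLM _𝕜 m f x = fderiv ℝ (⇑f) x m := rfl

lemma pd_apply (f : 𝓢(E3, ℝ)) (i : Fin 3) (x : E3) :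
    pderivCLM ℝ (e3 i) f x = fderiv ℝ (⇑f) x (e3 i) := pderivCLM_apply ℝ _ f x

lemma pd_coe (f : 𝓢(E3, ℝ)) (i : Fin 3) :
    ⇑(pderivCLM ℝ (e3 i) f) = fun y => fderiv ℝ (⇑f) y (e3 i) :=
  funext fun x => pd_apply f i x

/-- The Schwartz map version of `∂ᵢ (x·∇f) = x·∇(∂ᵢ f) + ∂ᵢ f`. -/
lemma pdTS (f : 𝓢(E3, ℝ)) (i : Fin 3) :
    pderivCLM ℝ (e3 i) (TS f)
      = TS (pderivCLM ℝ (e3 i) f) + pderivCLM ℝ (e3 i) f := by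
  ext x
  have h1 : ⇑(TS f) = fun y => fderiv ℝ (⇑f) y y := funext fun y => TS_apply f y
  rw [SchwartzMap.add_apply, pd_apply, TS_apply, pd_apply, h1,
    pd_T (⇑f) (smooth2 f) x (e3 i), pd_coe f i]

lemma lapS (f : 𝓢(E3, ℝ)) (x : E3) :
    laplacian (⇑f) x = ∑ i, pderivCLM ℝ (e3 i) (pderivCLM ℝ (e3 i) f) x := by
  rw [lap_eq (⇑f) (smooth2 f) x]
  refine Finset.sum_congr rfl fun i _ => ?_
  rw [pd_apply, pd_coe f i]

lemma mul_integrable (f g : 𝓢(E3, ℝ)) : Integrable (fun x => f x * g x) volume :=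
  g.integrable.bdd_mul f.continuous.aestronglyMeasurable
    (Filter.Eventually.of_forall fun x => norm_le_seminorm ℝ f x)

/-- Symmetry of the Laplacian via two integrations by parts. -/
lemma ibp_symm (f g : 𝓢(E3, ℝ)) (i : Fin 3) :
    ∫ x, pderivCLM ℝ (e3 i) (pderivCLM ℝ (e3 i) f) x * g x
      = ∫ x, pderivCLM ℝ (e3 i) (pderivCLM ℝ (e3 i) g) x * f x := by
  have key : ∀ u v : 𝓢(E3, ℝ),
      ∫ x, pderivCLM ℝ (e3 i) (pderivCLM ℝ (e3 i) u) x * v x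
        = - ∫ x, pderivCLM ℝ (e3 i) u x * pderivCLM ℝ (e3 i) v x := by
    intro u v
    have h1 : (fun x => pderivCLM ℝ (e3 i) (pderivCLM ℝ (e3 i) u) x * v x)
        = fun x => v x * fderiv ℝ (⇑(pderivCLM ℝ (e3 i) u)) x (e3 i) :=
      funext fun x => by rw [pd_apply, mul_comm]
    rw [h1]
    rw [integral_mul_fderiv_eq_neg_fderiv_mul_of_integrable]
    · rw [neg_inj]
      refine integral_congr_ae (Filter.EventuallyEq.of_eq (funext fun x => ?_))
      simp only [pd_apply]; ring
    · exact (mul_integrable (pderivCLM ℝ (e3 i) v) (pderivCLM ℝ (e3 i) u)).congr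
        (Filter.EventuallyEq.of_eq (funext fun x => by simp [pd_apply]))
    · exact (mul_integrable v (pderivCLM ℝ (e3 i) (pderivCLM ℝ (e3 i) u))).congr
        (Filter.EventuallyEq.of_eq (funext fun x => by simp [pd_apply]))
    · exact mul_integrable v _
    · exact fun x _ => v.differentiableAt
    · exact fun x _ => (pderivCLM ℝ (e3 i) u).differentiableAt
  rw [key f g, key g f]
  congr 1
  exact integral_congr_ae (Filter.EventuallyEq.of_eq
    (funext fun x => mul_comm _ _))

end ScalingAux

open ScalingAux SchwartzMap

theorem scaling_derivative_identity (α ε p : ℝ) (hα : 0 < α) (hε : 0 < ε)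
    (hp1 : 1 < p) (hp2 : p < 5)
    (Ψ v : SchwartzMap (EuclideanSpace ℝ (Fin 3)) ℝ)
    (hΨpos : ∀ x, 0 < Ψ x)
    (hvrad : ∀ x y : EuclideanSpace ℝ (Fin 3), ‖x‖ = ‖y‖ → v x = v y)
    (hΨeq : ∀ x, -laplacian (⇑Ψ) x + α * Ψ x = ε * Ψ x ^ p + Ψ x ^ (5 : ℕ))
    (hveq : ∀ x, -laplacian (⇑v) x + α * v x
        = (p * ε * Ψ x ^ (p - 1) + 5 * Ψ x ^ (4 : ℕ)) * v x)
    (w : EuclideanSpace ℝ (Fin 3) → ℝ)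
    (hw : w = fun x => fderiv ℝ (⇑Ψ) x x) :
    (∀ x, -laplacian w x + α * w x
        = (p * ε * Ψ x ^ (p - 1) + 5 * Ψ x ^ (4 : ℕ)) * w x
          + 2 * (-(α * Ψ x) + ε * Ψ x ^ p + Ψ x ^ (5 : ℕ))) ∧
    (∫ x : EuclideanSpace ℝ (Fin 3),
        (-(α * Ψ x) + ε * Ψ x ^ p + Ψ x ^ (5 : ℕ)) * v x) = 0 := by
  -- identify `w` with the Schwartz map `TS Ψ`
  have hwS : w = ⇑(TS Ψ) := by
    rw [hw]; exact (funext fun x => (TS_apply Ψ x).symm)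
  -- the function `G = α Ψ - ε Ψ^p - Ψ^5` is the Laplacian of `Ψ`
  set G : E3 → ℝ := fun y => α * Ψ y - (ε * Ψ y ^ p + Ψ y ^ (5 : ℕ)) with hG
  have hlapΨ : ∀ y, laplacian (⇑Ψ) y = G y := fun y => by
    have := hΨeq y; simp only [hG]; linarith
  -- derivative of G
  have hGderiv : ∀ x, fderiv ℝ G x x
      = α * (TS Ψ) x - (ε * (p * Ψ x ^ (p - 1)) + 5 * Ψ x ^ (4 : ℕ)) * (TS Ψ) x := by
    intro x
    have hΨx : HasFDerivAt (⇑Ψ) (fderiv ℝ (⇑Ψ) x) x := Ψ.differentiable.differentiableAt.hasFDerivAt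
    have h1 : HasFDerivAt (fun y => Ψ y ^ p)
        ((p * Ψ x ^ (p - 1)) • fderiv ℝ (⇑Ψ) x) x :=
      hΨx.rpow_const (Or.inl (ne_of_gt (hΨpos x)))
    have h2 : HasFDerivAt (fun y => Ψ y ^ (5 : ℕ))
        (((5 : ℝ) * Ψ x ^ (4 : ℕ)) • fderiv ℝ (⇑Ψ) x) x := by
      have h5 : HasFDerivAt (fun y => Ψ y ^ (5 : ℕ))
          ((((5 : ℕ) : ℝ) * Ψ x ^ (5 - 1)) • fderiv ℝ (⇑Ψ) x) x :=
        (hasDerivAt_pow 5 (Ψ x)).comp_hasFDerivAt x hΨx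
      rw [Nat.cast_ofNat] at h5
      exact h5
    have hGd : HasFDerivAt G
        (α • fderiv ℝ (⇑Ψ) x - (ε • ((p * Ψ x ^ (p - 1)) • fderiv ℝ (⇑Ψ) x)
          + ((5 : ℝ) * Ψ x ^ (4 : ℕ)) • fderiv ℝ (⇑Ψ) x)) x := by
      exact (hΨx.const_smul α).sub ((h1.const_smul ε).add h2)
    rw [hGd.fderiv]
    simp only [ContinuousLinearMap.coe_sub', ContinuousLinearMap.coe_smul',
      Pi.sub_apply, Pi.smul_apply, ContinuousLinearMap.add_apply,
      ContinuousLinearMap.smul_apply, smul_eq_mul, TS_apply]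
    push_cast
    ring
  -- Part 1 : the equation satisfied by w
  have part1 : ∀ x, -laplacian w x + α * w x
      = (p * ε * Ψ x ^ (p - 1) + 5 * Ψ x ^ (4 : ℕ)) * w x
        + 2 * (-(α * Ψ x) + ε * Ψ x ^ p + Ψ x ^ (5 : ℕ)) := by
    intro x
    have hlapw : laplacian w x = fderiv ℝ G x x + 2 * laplacian (⇑Ψ) x := by
      rw [hwS, lapS (TS Ψ) x]
      have step : ∀ i : Fin 3,
          pderivCLM ℝ (e3 i) (pderivCLM ℝ (e3 i) (TS Ψ)) x
            = TS (pderivCLM ℝ (e3 i) (pderivCLM ℝ (e3 i) Ψ)) x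
              + 2 * pderivCLM ℝ (e3 i) (pderivCLM ℝ (e3 i) Ψ) x := by
        intro i
        rw [pdTS Ψ i, map_add, pdTS (pderivCLM ℝ (e3 i) Ψ) i]
        simp only [SchwartzMap.add_apply]
        ring
      rw [Finset.sum_congr rfl fun i _ => step i, Finset.sum_add_distrib,
        ← Finset.mul_sum, ← lapS Ψ x]
      congr 1
      -- ∑ i, TS (∂ᵢ∂ᵢ Ψ) x = fderiv G x x
      have hsum : ∀ i : Fin 3, TS (pderivCLM ℝ (e3 i) (pderivCLM ℝ (e3 i) Ψ)) x
          = fderiv ℝ (fun y => (pderivCLM ℝ (e3 i) (pderivCLM ℝ (e3 i) Ψ)) y) x x :=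
        fun i => TS_apply _ x
      rw [Finset.sum_congr rfl fun i _ => hsum i]
      have hdiff : ∀ i ∈ (Finset.univ : Finset (Fin 3)),
          DifferentiableAt ℝ (fun y => (pderivCLM ℝ (e3 i) (pderivCLM ℝ (e3 i) Ψ)) y) x :=
        fun i _ => (pderivCLM ℝ (e3 i) (pderivCLM ℝ (e3 i) Ψ)).differentiable.differentiableAt
      have := fderiv_sum hdiff (x := x)
      have hGfun : G = fun y => ∑ i, (pderivCLM ℝ (e3 i) (pderivCLM ℝ (e3 i) Ψ)) y :=
        funext fun y => by rw [← lapS Ψ y, hlapΨ y]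
      calc ∑ i, fderiv ℝ (fun y => (pderivCLM ℝ (e3 i) (pderivCLM ℝ (e3 i) Ψ)) y) x x
          = (∑ i, fderiv ℝ (fun y => (pderivCLM ℝ (e3 i) (pderivCLM ℝ (e3 i) Ψ)) y) x) x := by
            simp [ContinuousLinearMap.sum_apply]
        _ = fderiv ℝ (fun y => ∑ i, (pderivCLM ℝ (e3 i) (pderivCLM ℝ (e3 i) Ψ)) y) x x := by
            rw [fderiv_fun_sum hdiff]
        _ = fderiv ℝ G x x := by rw [← hGfun]
    have h1 := hGderiv x
    have h2 := hlapΨ x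
    have h3 := hΨeq x
    rw [hwS] at *
    rw [hlapw, h1, h2]
    simp only [hG]
    ring
  refine ⟨part1, ?_⟩
  -- Part 2 : the orthogonality relation
  -- abbreviations
  set W : 𝓢(E3, ℝ) := TS Ψ with hWdef
  have hlapw : ∀ x, laplacian w x = ∑ i, pderivCLM ℝ (e3 i) (pderivCLM ℝ (e3 i) W) x :=
    fun x => by rw [hwS]; exact lapS W x
  have hlapv : ∀ x, laplacian (⇑v) x = ∑ i, pderivCLM ℝ (e3 i) (pderivCLM ℝ (e3 i) v) x :=
    fun x => lapS v x
  -- pointwise identity for the integrand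
  have hpoint : ∀ x, (-(α * Ψ x) + ε * Ψ x ^ p + Ψ x ^ (5 : ℕ)) * v x
      = (1 / 2) * ((∑ i, pderivCLM ℝ (e3 i) (pderivCLM ℝ (e3 i) v) x) * W x
          - (∑ i, pderivCLM ℝ (e3 i) (pderivCLM ℝ (e3 i) W) x) * v x) := by
    intro x
    have h1 := part1 x
    have h2 := hveq x
    rw [hlapw x] at h1
    rw [hlapv x] at h2
    rw [hwS] at h1
    set Lw := ∑ i, pderivCLM ℝ (e3 i) (pderivCLM ℝ (e3 i) W) x with hLw
    set Lv := ∑ i, pderivCLM ℝ (e3 i) (pderivCLM ℝ (e3 i) v) x with hLv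
    set Vx := p * ε * Ψ x ^ (p - 1) + 5 * Ψ x ^ (4 : ℕ) with hVx
    set gx := -(α * Ψ x) + ε * Ψ x ^ p + Ψ x ^ (5 : ℕ) with hgx
    -- h1 : -Lw + α W x = Vx * W x + 2 gx ; h2 : -Lv + α v x = Vx * v x
    have e1 : 2 * gx = -Lw + α * W x - Vx * W x := by linarith
    have e2 : Vx * v x = -Lv + α * v x := by linarith
    have : 2 * (gx * v x) = Lv * W x - Lw * v x := by
      calc 2 * (gx * v x) = (2 * gx) * v x := by ring
        _ = (-Lw + α * W x - Vx * W x) * v x := by rw [e1]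
        _ = -(Lw * v x) + α * W x * v x - W x * (Vx * v x) := by ring
        _ = -(Lw * v x) + α * W x * v x - W x * (-Lv + α * v x) := by rw [e2]
        _ = Lv * W x - Lw * v x := by ring
    linear_combination this / 2
  rw [integral_congr_ae (Filter.EventuallyEq.of_eq (funext hpoint))]
  -- expand the sums and integrate term by term
  have expand : ∀ (f g : 𝓢(E3, ℝ)),
      (∫ x, (∑ i, pderivCLM ℝ (e3 i) (pderivCLM ℝ (e3 i) f) x) * g x)
        = ∑ i, ∫ x, pderivCLM ℝ (e3 i) (pderivCLM ℝ (e3 i) f) x * g x := by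
    intro f g
    have : (fun x => (∑ i, pderivCLM ℝ (e3 i) (pderivCLM ℝ (e3 i) f) x) * g x)
        = fun x => ∑ i, pderivCLM ℝ (e3 i) (pderivCLM ℝ (e3 i) f) x * g x :=
      funext fun x => Finset.sum_mul _ _ _
    rw [this]
    exact integral_finset_sum _ fun i _ => mul_integrable _ _
  have hintf : ∀ (f g : 𝓢(E3, ℝ)),
      Integrable (fun x => (∑ i, pderivCLM ℝ (e3 i) (pderivCLM ℝ (e3 i) f) x) * g x) volume := by
    intro f g
    have : (fun x => (∑ i, pderivCLM ℝ (e3 i) (pderivCLM ℝ (e3 i) f) x) * g x)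
        = fun x => ∑ i, pderivCLM ℝ (e3 i) (pderivCLM ℝ (e3 i) f) x * g x :=
      funext fun x => Finset.sum_mul _ _ _
    rw [this]
    exact integrable_finset_sum _ fun i _ => mul_integrable _ _
  rw [integral_const_mul, integral_sub (hintf v W) (hintf W v), expand v W, expand W v]
  have : ∀ i : Fin 3, (∫ x, pderivCLM ℝ (e3 i) (pderivCLM ℝ (e3 i) v) x * W x)
      = ∫ x, pderivCLM ℝ (e3 i) (pderivCLM ℝ (e3 i) W) x * v x := fun i => ibp_symm v W i
  rw [Finset.sum_congr rfl fun i _ => this i]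
  ring
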